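/- For every real z with 0 < z < 1, setting R = R(x,z) = √(1 − 2zx + z²) (the positive square root, which satisfies R > 0 for all x ∈ [−1,1]), one has ∫_{−1}^{1} [4(1−x²)/(R·(1−z+R)·(1+z+R))] · ln((1+x)/(1−x)) dx = (4/(3z³)) · [4z² + (z³ − 3z)·ln((1+z)/(1−z)) − 2·ln((1+z)(1−z))]. -/

import Mathlib

open MeasureTheory Real Set Filter Topology

set_option maxHeartbeats 1000000

namespace GFI
noncomputable def S (z x : ℝ) : ℝ := Real.sqrt (1 - 2*z*x + z^2)

noncomputable def G0 (z x : ℝ) : ℝ := x - S z x * (z*x + z^2 - 2)/(3*z)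

noncomputable def Cc (z x : ℝ) : ℝ :=
  (1/(3*z)) * (-(4*z*S z x) + ((1-z)^2*(z+2) - (1+z)^2*(2-z)) * Real.log (2*z)
    - 2*(1-z)^2*(z+2) * Real.log (S z x + 1 - z)
    + 2*(1+z)^2*(2-z) * Real.log (1 + z + S z x))

noncomputable def H (z x : ℝ) : ℝ :=
  (2/z^2) * ((G0 z x + 1 - (1+z)^2*(2-z)/(3*z)) * Real.log (1+x)
    + (1 + (1-z)^2*(z+2)/(3*z) - G0 z x) * Real.log (1-x)
    + Cc z x)

theorem upos {z x : ℝ} (hz0 : 0 < z) (hz1 : z < 1) (hx : x ≤ 1) : 0 < 1 - 2*z*x + z^2 := by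
  nlinarith [sq_nonneg (1-z)]

theorem Spos {z x : ℝ} (hz0 : 0 < z) (hz1 : z < 1) (hx : x ≤ 1) : 0 < S z x :=
  Real.sqrt_pos.2 (upos hz0 hz1 hx)

theorem Ssq {z x : ℝ} (hz0 : 0 < z) (hz1 : z < 1) (hx : x ≤ 1) : S z x ^ 2 = 1 - 2*z*x + z^2 :=
  Real.sq_sqrt (upos hz0 hz1 hx).le

theorem Sge {z x : ℝ} (hz0 : 0 < z) (hz1 : z < 1) (hx : x ≤ 1) : 1 - z ≤ S z x := by
  have h : (1-z)^2 ≤ 1 - 2*z*x + z^2 := by nlinarith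
  calc 1 - z = Real.sqrt ((1-z)^2) := by rw [Real.sqrt_sq (by linarith)]
  _ ≤ S z x := Real.sqrt_le_sqrt h

theorem hasDerivAt_S {z x : ℝ} (hz0 : 0 < z) (hz1 : z < 1) (hx : x ≤ 1) :
    HasDerivAt (S z) (-z / S z x) x := by
  have h1 : HasDerivAt (fun x : ℝ => 1 - 2*z*x + z^2) (-(2*z)) x := by
    simpa using (((hasDerivAt_id x).const_mul (2*z)).const_sub 1).add_const (z^2)
  have h2 := (Real.hasDerivAt_sqrt (upos hz0 hz1 hx).ne').comp x h1
  refine h2.congr_deriv ?_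
  have hs := Spos hz0 hz1 hx
  rw [S] at hs ⊢
  field_simp

theorem hasDerivAt_H {z x : ℝ} (hz0 : 0 < z) (hz1 : z < 1) (hx : x ∈ Ioo (-1:ℝ) 1) :
    HasDerivAt (H z)
      (4 * (1 - x ^ 2) / (S z x * (1 - z + S z x) * (1 + z + S z x)) *
        Real.log ((1 + x) / (1 - x))) x := by
  obtain ⟨hx1, hx2⟩ := hx
  have hzne : z ≠ 0 := hz0.ne'
  have hs := Spos hz0 hz1 hx2.le
  have hsne : S z x ≠ 0 := hs.ne'
  have hs2 := Ssq hz0 hz1 hx2.le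
  have hmzpos : 0 < S z x + 1 - z := by linarith [Sge hz0 hz1 hx2.le]
  have hpzpos : 0 < 1 + z + S z x := by linarith
  have h1x : (0:ℝ) < 1 + x := by linarith
  have h2x : (0:ℝ) < 1 - x := by linarith
  -- derivative of S
  have hS := hasDerivAt_S hz0 hz1 hx2.le
  -- derivative of G0
  have hlin : HasDerivAt (fun y : ℝ => z*y + z^2 - 2) z x := by
    simpa using (((hasDerivAt_id x).const_mul z).add_const (z^2)).sub_const 2
  have hG : HasDerivAt (G0 z) (1 - ((-z/S z x)*(z*x+z^2-2) + S z x * z)/(3*z)) x := by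
    have := (hasDerivAt_id x).sub ((hS.mul hlin).div_const (3*z))
    exact this
  set dG := 1 - ((-z/S z x)*(z*x+z^2-2) + S z x * z)/(3*z) with hdG
  -- logs
  have hl1 : HasDerivAt (fun y : ℝ => Real.log (1+y)) (1/(1+x)) x := by
    have := (Real.hasDerivAt_log h1x.ne').comp x ((hasDerivAt_id x).const_add 1)
    refine this.congr_deriv ?_
    simp
  have hl2 : HasDerivAt (fun y : ℝ => Real.log (1-y)) (-(1/(1-x))) x := by
    have := (Real.hasDerivAt_log h2x.ne').comp x ((hasDerivAt_id x).const_sub 1)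
    refine this.congr_deriv ?_
    field_simp
  have hlsm : HasDerivAt (fun y : ℝ => Real.log (S z y + 1 - z))
      (-z/(S z x * (S z x + 1 - z))) x := by
    have := (Real.hasDerivAt_log hmzpos.ne').comp x ((hS.add_const 1).sub_const z)
    refine this.congr_deriv ?_
    rw [inv_mul_eq_div, div_div]
  have hlsp : HasDerivAt (fun y : ℝ => Real.log (1 + z + S z y))
      (-z/(S z x * (1 + z + S z x))) x := by
    have := (Real.hasDerivAt_log hpzpos.ne').comp x (hS.const_add (1+z))
    refine this.congr_deriv ?_
    rw [inv_mul_eq_div, div_div]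
  -- derivative of Cc
  set dC := (1/(3*z)) * (4*z^2/S z x + 2*((1-z)^2*(z+2))*z/(S z x*(S z x+1-z))
      - 2*((1+z)^2*(2-z))*z/(S z x*(1+z+S z x))) with hdC
  have hC : HasDerivAt (Cc z) dC x := by
    have h4 : HasDerivAt (fun y : ℝ => -(4*z*S z y)) (-(4*z*(-z/S z x))) x :=
      (hS.const_mul (4*z)).neg
    have hbig := (((h4.add_const (((1-z)^2*(z+2) - (1+z)^2*(2-z)) * Real.log (2*z))).sub
        (hlsm.const_mul (2*(1-z)^2*(z+2)))).add
        (hlsp.const_mul (2*(1+z)^2*(2-z)))).const_mul (1/(3*z))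
    have heq : dC = (1/(3*z)) * (-(4*z*(-z/S z x))
        - 2*(1-z)^2*(z+2)*(-z/(S z x*(S z x+1-z)))
        + 2*(1+z)^2*(2-z)*(-z/(S z x*(1+z+S z x)))) := by
      rw [hdC]; field_simp; ring
    rw [show (Cc z) = fun y => Cc z y from rfl]
    simp only [Cc]
    rw [heq]
    exact hbig
  -- assemble H
  have hP : HasDerivAt (fun y => G0 z y + 1 - (1+z)^2*(2-z)/(3*z)) dG x :=
    (hG.add_const 1).sub_const _
  have hQ : HasDerivAt (fun y => 1 + (1-z)^2*(z+2)/(3*z) - G0 z y) (-dG) x := by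
    refine ((hasDerivAt_const x (1 + (1-z)^2*(z+2)/(3*z))).sub hG).congr_deriv ?_
    simp
  have hH : HasDerivAt (H z)
      ((2/z^2) * ((dG * Real.log (1+x) + (G0 z x + 1 - (1+z)^2*(2-z)/(3*z)) * (1/(1+x)))
        + ((-dG) * Real.log (1-x) + (1 + (1-z)^2*(z+2)/(3*z) - G0 z x) * (-(1/(1-x))))
        + dC)) x := by
    have := (((hP.mul hl1).add (hQ.mul hl2)).add hC).const_mul (2/z^2)
    refine this.congr_deriv ?_
    ring
  have hne1 : (1:ℝ) - z + S z x ≠ 0 := by nlinarith [hs]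
  have hne2 : (1:ℝ) + z + S z x ≠ 0 := by nlinarith [hs]
  have hne3 : S z x + 1 - z ≠ 0 := hmzpos.ne'
  have e1 : (2/z^2) * dG = 4*(1-x^2)/(S z x*(1-z+S z x)*(1+z+S z x)) := by
    rw [hdG]
    field_simp
    linear_combination ((-2)*S z x^2 + (2)*S z x + (2)*z^2 + (6)*z*x + (4)) * hs2
  have e2 : (2/z^2) * ((G0 z x + 1 - (1+z)^2*(2-z)/(3*z)) * (1/(1+x))
      + (1 + (1-z)^2*(z+2)/(3*z) - G0 z x) * (-(1/(1-x))) + dC) = 0 := by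
    rw [hdC, G0]
    field_simp
    linear_combination ((-4)*S z x^2*z^2 + (-4)*S z x^2*z*x + (8)*S z x^2 + (-4)*S z x*z^3*x + (-8)*S z x*z^2 + (4)*S z x*z*x + (8)*S z x) * hs2
  convert hH using 1
  rw [Real.log_div h1x.ne' h2x.ne']
  linear_combination (Real.log (1-x) - Real.log (1+x)) * e1 - e2

theorem Sone {z : ℝ} (hz0 : 0 < z) (hz1 : z < 1) : S z 1 = 1 - z := by
  rw [S, show 1-2*z*1+z^2 = (1-z)^2 by ring, Real.sqrt_sq (by linarith)]

theorem Smone {z : ℝ} (hz0 : 0 < z) (hz1 : z < 1) : S z (-1) = 1 + z := by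
  rw [S, show 1-2*z*(-1)+z^2 = (1+z)^2 by ring, Real.sqrt_sq (by linarith)]

theorem Scont (z : ℝ) : Continuous (S z) :=
  Real.continuous_sqrt.comp (by continuity)

theorem G0cont (z : ℝ) : Continuous (G0 z) := by
  unfold G0
  exact continuous_id.sub (((Scont z).mul (by continuity)).div_const _)

theorem Qfact {z x : ℝ} (hz0 : 0 < z) (hz1 : z < 1) (hx : x ≤ 1) :
    1 + (1-z)^2*(z+2)/(3*z) - G0 z x
      = (1-x) * (1 + 2*(z*x+z^2-2)/(3*(S z x+1-z)) - (1-z)/3) := by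
  have hs := Spos hz0 hz1 hx
  have hs2 := Ssq hz0 hz1 hx
  have hne3 : S z x + 1 - z ≠ 0 := by nlinarith [Sge hz0 hz1 hx]
  rw [G0]
  field_simp
  linear_combination (z^2 + z*x + (-2)) * hs2

theorem Pfact {z x : ℝ} (hz0 : 0 < z) (hz1 : z < 1) (hx : x ≤ 1) :
    G0 z x + 1 - (1+z)^2*(2-z)/(3*z)
      = (1+x) * (1 + 2*(z*x+z^2-2)/(3*(1+z+S z x)) - (1+z)/3) := by
  have hs := Spos hz0 hz1 hx
  have hs2 := Ssq hz0 hz1 hx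
  have hne2 : (1:ℝ) + z + S z x ≠ 0 := by nlinarith [hs]
  rw [G0]
  field_simp
  linear_combination ((-1)*z^2 + (-1)*z*x + (2)) * hs2

theorem tendsto_mul_log_zero : Tendsto (fun t : ℝ => t * Real.log t) (𝓝[>] 0) (𝓝 0) := by
  have h := tendsto_log_mul_rpow_nhdsGT_zero (r := 1) one_pos
  simp only [Real.rpow_one] at h
  simpa [mul_comm] using h

theorem tendsto_one_sub : Tendsto (fun x : ℝ => 1 - x) (𝓝[<] (1:ℝ)) (𝓝[>] 0) := by
  apply tendsto_nhdsWithin_of_tendsto_nhds_of_eventually_within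
  · exact (Continuous.tendsto' (by continuity) 1 0 (by norm_num)).mono_left nhdsWithin_le_nhds
  · filter_upwards [self_mem_nhdsWithin] with x hx
    simp only [mem_Iio] at hx
    simpa [mem_Ioi] using hx

theorem tendsto_one_add : Tendsto (fun x : ℝ => 1 + x) (𝓝[>] (-1:ℝ)) (𝓝[>] 0) := by
  apply tendsto_nhdsWithin_of_tendsto_nhds_of_eventually_within
  · exact (Continuous.tendsto' (by continuity) (-1) 0 (by norm_num)).mono_left nhdsWithin_le_nhds
  · filter_upwards [self_mem_nhdsWithin] with x hx
    simp only [mem_Ioi] at hx ⊢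
    linarith

theorem tendsto_H_one {z : ℝ} (hz0 : 0 < z) (hz1 : z < 1) :
    Tendsto (H z) (𝓝[<] (1:ℝ))
      (𝓝 ((2/z^2) * ((G0 z 1 + 1 - (1+z)^2*(2-z)/(3*z)) * Real.log 2 + Cc z 1))) := by
  have hTP : Tendsto (fun x => (G0 z x + 1 - (1+z)^2*(2-z)/(3*z)) * Real.log (1+x))
      (𝓝[<] (1:ℝ)) (𝓝 ((G0 z 1 + 1 - (1+z)^2*(2-z)/(3*z)) * Real.log (1+1))) := by
    have hc : ContinuousAt (fun x : ℝ => (G0 z x + 1 - (1+z)^2*(2-z)/(3*z)) * Real.log (1+x)) 1 :=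
      (((G0cont z).continuousAt.add continuousAt_const).sub continuousAt_const).mul
        ((continuous_const.add continuous_id).continuousAt.log (by norm_num))
    exact hc.tendsto.mono_left nhdsWithin_le_nhds
  have hTC : Tendsto (Cc z) (𝓝[<] (1:ℝ)) (𝓝 (Cc z 1)) := by
    have h1 : S z 1 + 1 - z ≠ 0 := by rw [Sone hz0 hz1]; intro h; nlinarith
    have h2 : 1 + z + S z 1 ≠ 0 := by rw [Sone hz0 hz1]; intro h; nlinarith
    have hc : ContinuousAt (Cc z) 1 := by
      unfold Cc
      exact (((((continuous_const.mul (Scont z)).neg.continuousAt.add continuousAt_const).sub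
        (continuousAt_const.mul ((((Scont z).add continuous_const).sub
          continuous_const).continuousAt.log h1))).add
        (continuousAt_const.mul (((continuous_const.add (Scont z)).continuousAt).log h2))).const_mul _)
    exact hc.tendsto.mono_left nhdsWithin_le_nhds
  have hTQ : Tendsto (fun x => (1 + (1-z)^2*(z+2)/(3*z) - G0 z x) * Real.log (1-x))
      (𝓝[<] (1:ℝ)) (𝓝 0) := by
    have heq : (fun x => (1 + (1-z)^2*(z+2)/(3*z) - G0 z x) * Real.log (1-x))
        =ᶠ[𝓝[<] (1:ℝ)] fun x =>
          (1 + 2*(z*x+z^2-2)/(3*(S z x+1-z)) - (1-z)/3) * ((1-x) * Real.log (1-x)) := by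
      filter_upwards [self_mem_nhdsWithin] with x hx
      rw [Qfact hz0 hz1 (le_of_lt hx)]
      ring
    rw [tendsto_congr' heq]
    have hpsi : Tendsto (fun x => 1 + 2*(z*x+z^2-2)/(3*(S z x+1-z))- (1-z)/3) (𝓝[<] (1:ℝ))
        (𝓝 (1 + 2*(z*1+z^2-2)/(3*(S z 1+1-z)) - (1-z)/3)) := by
      have hden : (3:ℝ)*(S z 1 + 1 - z) ≠ 0 := by rw [Sone hz0 hz1]; intro h; nlinarith
      have hc : ContinuousAt (fun x : ℝ => 1 + 2*(z*x+z^2-2)/(3*(S z x+1-z)) - (1-z)/3) 1 :=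
        (continuousAt_const.add ((continuousAt_const.mul (by fun_prop)).div
          (continuousAt_const.mul ((((Scont z).add continuous_const).sub continuous_const).continuousAt)) hden)).sub
          continuousAt_const
      exact hc.tendsto.mono_left nhdsWithin_le_nhds
    have hlg : Tendsto (fun x : ℝ => (1-x) * Real.log (1-x)) (𝓝[<] (1:ℝ)) (𝓝 0) := by
      have := tendsto_mul_log_zero.comp tendsto_one_sub
      exact this
    have := hpsi.mul hlg
    simpa using this
  have := ((hTP.add hTQ).add hTC).const_mul (2/z^2)
  rw [show (1:ℝ)+1 = 2 by norm_num] at this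
  simp only [add_zero] at this
  have hfun : (fun x => (2/z^2) * ((G0 z x + 1 - (1+z)^2*(2-z)/(3*z)) * Real.log (1+x)
      + (1 + (1-z)^2*(z+2)/(3*z) - G0 z x) * Real.log (1-x) + Cc z x)) = H z := by
    funext y; rw [H]
  rw [← hfun]
  exact this

theorem tendsto_H_mone {z : ℝ} (hz0 : 0 < z) (hz1 : z < 1) :
    Tendsto (H z) (𝓝[>] (-1:ℝ))
      (𝓝 ((2/z^2) * ((1 + (1-z)^2*(z+2)/(3*z) - G0 z (-1)) * Real.log 2 + Cc z (-1)))) := by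
  have hTQ : Tendsto (fun x => (1 + (1-z)^2*(z+2)/(3*z) - G0 z x) * Real.log (1-x))
      (𝓝[>] (-1:ℝ)) (𝓝 ((1 + (1-z)^2*(z+2)/(3*z) - G0 z (-1)) * Real.log (1-(-1)))) := by
    have hc : ContinuousAt (fun x : ℝ => (1 + (1-z)^2*(z+2)/(3*z) - G0 z x) * Real.log (1-x)) (-1) :=
      ((continuousAt_const.sub (G0cont z).continuousAt)).mul
        ((continuous_const.sub continuous_id).continuousAt.log (by norm_num))
    exact hc.tendsto.mono_left nhdsWithin_le_nhds
  have hTC : Tendsto (Cc z) (𝓝[>] (-1:ℝ)) (𝓝 (Cc z (-1))) := by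
    have h1 : S z (-1) + 1 - z ≠ 0 := by rw [Smone hz0 hz1]; intro h; nlinarith
    have h2 : 1 + z + S z (-1) ≠ 0 := by rw [Smone hz0 hz1]; intro h; nlinarith
    have hc : ContinuousAt (Cc z) (-1) := by
      unfold Cc
      exact (((((continuous_const.mul (Scont z)).neg.continuousAt.add continuousAt_const).sub
        (continuousAt_const.mul ((((Scont z).add continuous_const).sub
          continuous_const).continuousAt.log h1))).add
        (continuousAt_const.mul (((continuous_const.add (Scont z)).continuousAt).log h2))).const_mul _)
    exact hc.tendsto.mono_left nhdsWithin_le_nhds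
  have hTP : Tendsto (fun x => (G0 z x + 1 - (1+z)^2*(2-z)/(3*z)) * Real.log (1+x))
      (𝓝[>] (-1:ℝ)) (𝓝 0) := by
    have heq : (fun x => (G0 z x + 1 - (1+z)^2*(2-z)/(3*z)) * Real.log (1+x))
        =ᶠ[𝓝[>] (-1:ℝ)] fun x =>
          (1 + 2*(z*x+z^2-2)/(3*(1+z+S z x)) - (1+z)/3) * ((1+x) * Real.log (1+x)) := by
      filter_upwards [Ioo_mem_nhdsGT (by norm_num : (-1:ℝ) < 1)] with x hx
      rw [Pfact hz0 hz1 (le_of_lt hx.2)]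
      ring
    rw [tendsto_congr' heq]
    have hpsi : Tendsto (fun x => 1 + 2*(z*x+z^2-2)/(3*(1+z+S z x)) - (1+z)/3) (𝓝[>] (-1:ℝ))
        (𝓝 (1 + 2*(z*(-1)+z^2-2)/(3*(1+z+S z (-1))) - (1+z)/3)) := by
      have hden : (3:ℝ)*(1 + z + S z (-1)) ≠ 0 := by rw [Smone hz0 hz1]; intro h; nlinarith
      have hc : ContinuousAt (fun x : ℝ => 1 + 2*(z*x+z^2-2)/(3*(1+z+S z x)) - (1+z)/3) (-1) :=
        (continuousAt_const.add ((continuousAt_const.mul (by fun_prop)).div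
          (continuousAt_const.mul ((continuous_const.add (Scont z)).continuousAt)) hden)).sub
          continuousAt_const
      exact hc.tendsto.mono_left nhdsWithin_le_nhds
    have hlg : Tendsto (fun x : ℝ => (1+x) * Real.log (1+x)) (𝓝[>] (-1:ℝ)) (𝓝 0) := by
      have := tendsto_mul_log_zero.comp tendsto_one_add
      exact this
    have := hpsi.mul hlg
    simpa using this
  have := ((hTP.add hTQ).add hTC).const_mul (2/z^2)
  rw [show (1:ℝ) - -1 = 2 by norm_num] at this
  simp only [zero_add] at this
  have hfun : (fun x => (2/z^2) * ((G0 z x + 1 - (1+z)^2*(2-z)/(3*z)) * Real.log (1+x)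
      + (1 + (1-z)^2*(z+2)/(3*z) - G0 z x) * Real.log (1-x) + Cc z x)) = H z := by
    funext y; rw [H]
  rw [← hfun]
  exact this

theorem loglem {t : ℝ} (ht : 0 < t) (ht2 : t ≤ 2) : |Real.log t| ≤ 2 * t ^ (-(1/2) : ℝ) := by
  have hrt : t ^ (-(1/2):ℝ) = (Real.sqrt t)⁻¹ := by
    rw [Real.rpow_neg ht.le, Real.sqrt_eq_rpow]
  rw [hrt]
  have hst : 0 < Real.sqrt t := Real.sqrt_pos.2 ht
  rcases le_or_gt 1 t with h1 | h1
  · rw [abs_of_nonneg (Real.log_nonneg h1)]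
    have h2 : Real.sqrt t ≤ 2 := by
      calc Real.sqrt t ≤ Real.sqrt 4 := Real.sqrt_le_sqrt (by linarith)
      _ = 2 := by rw [show (4:ℝ) = 2^2 by norm_num, Real.sqrt_sq (by norm_num)]
    have h3 : (1:ℝ) ≤ 2 * (Real.sqrt t)⁻¹ := by
      rw [show (2:ℝ)*(Real.sqrt t)⁻¹ = 2/Real.sqrt t by ring, le_div_iff₀ hst]
      linarith
    have h4 : Real.log t ≤ t - 1 := Real.log_le_sub_one_of_pos ht
    linarith
  · rw [abs_of_nonpos (Real.log_nonpos ht.le h1.le)]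
    have h2 : Real.log ((Real.sqrt t)⁻¹) ≤ (Real.sqrt t)⁻¹ - 1 :=
      Real.log_le_sub_one_of_pos (inv_pos.2 hst)
    rw [Real.log_inv, Real.log_sqrt ht.le] at h2
    have h3 : (0:ℝ) < (Real.sqrt t)⁻¹ := inv_pos.2 hst
    linarith

theorem intInteg {z : ℝ} (hz0 : 0 < z) (hz1 : z < 1) :
    IntervalIntegrable
      (fun x => 4*(1-x^2)/(S z x*(1-z+S z x)*(1+z+S z x)) * Real.log ((1+x)/(1-x)))
      volume (-1) 1 := by
  have hz1' : (0:ℝ) < 1 - z := by linarith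
  have hg1 : IntervalIntegrable (fun y : ℝ => y ^ (-(1/2):ℝ)) volume 0 2 :=
    intervalIntegral.intervalIntegrable_rpow' (by norm_num)
  have hg2 : IntervalIntegrable (fun x : ℝ => (1+x:ℝ) ^ (-(1/2):ℝ)) volume (-1) 1 := by
    have := hg1.comp_add_left 1
    norm_num at this
    exact this
  have hg3 : IntervalIntegrable (fun x : ℝ => (1-x:ℝ) ^ (-(1/2):ℝ)) volume (-1) 1 := by
    have := (hg1.comp_sub_left 1).symm
    norm_num at this
    exact this
  have hgint : IntervalIntegrable
      (fun x : ℝ => (1/(1-z)^2) * (2*(1+x:ℝ) ^ (-(1/2):ℝ) + 2*(1-x:ℝ) ^ (-(1/2):ℝ)))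
      volume (-1) 1 := ((hg2.const_mul 2).add (hg3.const_mul 2)).const_mul _
  apply hgint.mono_fun'
  · apply Measurable.aestronglyMeasurable
    apply Measurable.mul
    · apply Measurable.div (by fun_prop)
      apply Measurable.mul
      · apply Measurable.mul
        · exact (Real.continuous_sqrt.comp (by continuity)).measurable
        · exact (continuous_const.add (Real.continuous_sqrt.comp (by continuity))).measurable
      · exact (continuous_const.add (Real.continuous_sqrt.comp (by continuity))).measurable
    · exact Real.measurable_log.comp (by fun_prop)
  · rw [Set.uIoc_of_le (by norm_num : (-1:ℝ) ≤ 1)]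
    filter_upwards [MeasureTheory.ae_restrict_mem measurableSet_Ioc] with x hx
    obtain ⟨hx1, hx2⟩ := hx
    have hs := Spos hz0 hz1 hx2
    have hsge := Sge hz0 hz1 hx2
    have hbpos : 0 < S z x*(1-z+S z x)*(1+z+S z x) := by
      apply mul_pos (mul_pos hs (by linarith)) (by linarith)
    rcases eq_or_lt_of_le hx2 with rfl | hlt
    · have : Real.log ((1+(1:ℝ))/(1-1)) = 0 := by norm_num
      rw [this]
      simp only [mul_zero, norm_zero]
      positivity
    · have h1x : (0:ℝ) < 1 + x := by linarith
      have h2x : (0:ℝ) < 1 - x := by linarith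
      have hcnn : 0 ≤ 4*(1-x^2)/(S z x*(1-z+S z x)*(1+z+S z x)) :=
        div_nonneg (by nlinarith) hbpos.le
      have hub : 4*(1-x^2)/(S z x*(1-z+S z x)*(1+z+S z x)) ≤ 1/(1-z)^2 := by
        rw [div_le_div_iff₀ hbpos (by positivity)]
        have e1 : (1-z)*(2*(1-z))*2 ≤ S z x*(1-z+S z x)*(1+z+S z x) := by
          have m1 : (1-z)*(2*(1-z)) ≤ S z x*(1-z+S z x) :=
            mul_le_mul hsge (by linarith) (by linarith) hs.le
          exact mul_le_mul m1 (by linarith) (by norm_num) (mul_nonneg hs.le (by linarith))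
        nlinarith [sq_nonneg (1-z), sq_nonneg x, mul_nonneg (sq_nonneg x) (sq_nonneg (1-z))]
      have hb1 : |Real.log (1+x)| ≤ 2*(1+x:ℝ) ^ (-(1/2):ℝ) := loglem h1x (by linarith)
      have hb2 : |Real.log (1-x)| ≤ 2*(1-x:ℝ) ^ (-(1/2):ℝ) := loglem h2x (by linarith)
      have htri : |Real.log (1+x) - Real.log (1-x)| ≤ |Real.log (1+x)| + |Real.log (1-x)| := by
        rw [sub_eq_add_neg]
        exact (abs_add_le _ _).trans (by rw [abs_neg])
      calc ‖4*(1-x^2)/(S z x*(1-z+S z x)*(1+z+S z x)) * Real.log ((1+x)/(1-x))‖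
          = 4*(1-x^2)/(S z x*(1-z+S z x)*(1+z+S z x))
            * |Real.log (1+x) - Real.log (1-x)| := by
            rw [Real.log_div h1x.ne' h2x.ne', norm_mul, Real.norm_eq_abs, Real.norm_eq_abs,
              abs_of_nonneg hcnn]
        _ ≤ 4*(1-x^2)/(S z x*(1-z+S z x)*(1+z+S z x))
            * (|Real.log (1+x)| + |Real.log (1-x)|) :=
              mul_le_mul_of_nonneg_left htri hcnn
        _ ≤ (1/(1-z)^2) * (2*(1+x:ℝ) ^ (-(1/2):ℝ) + 2*(1-x:ℝ) ^ (-(1/2):ℝ)) := by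
              apply mul_le_mul hub (add_le_add hb1 hb2) (by positivity) (by positivity)

end GFI

/-- For `0 < z < 1`, with `R = √(1 − 2zx + z²)`,
`∫_{−1}^{1} [4(1−x²)/(R(1−z+R)(1+z+R))] · ln((1+x)/(1−x)) dx
  = (4/(3z³)) · [4z² + (z³ − 3z)·ln((1+z)/(1−z)) − 2·ln((1+z)(1−z))]`. -/
theorem generating_function_integral (z : ℝ) (hz0 : 0 < z) (hz1 : z < 1) :
    ∫ x in (-1:ℝ)..1,
        (4 * (1 - x ^ 2) /
            (Real.sqrt (1 - 2 * z * x + z ^ 2) *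
              (1 - z + Real.sqrt (1 - 2 * z * x + z ^ 2)) *
              (1 + z + Real.sqrt (1 - 2 * z * x + z ^ 2)))) *
          Real.log ((1 + x) / (1 - x))
      = (4 / (3 * z ^ 3)) *
          (4 * z ^ 2 + (z ^ 3 - 3 * z) * Real.log ((1 + z) / (1 - z))
            - 2 * Real.log ((1 + z) * (1 - z))) := by
  have key := intervalIntegral.integral_eq_sub_of_hasDerivAt_of_tendsto
    (f := GFI.H z)
    (f' := fun x => 4*(1-x^2)/(GFI.S z x*(1-z+GFI.S z x)*(1+z+GFI.S z x))
      * Real.log ((1+x)/(1-x)))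
    (by norm_num : (-1:ℝ) < 1)
    (fun x hx => GFI.hasDerivAt_H hz0 hz1 hx)
    (GFI.intInteg hz0 hz1)
    (GFI.tendsto_H_mone hz0 hz1)
    (GFI.tendsto_H_one hz0 hz1)
  unfold GFI.S at key
  rw [show (∫ x in (-1:ℝ)..1,
        (4 * (1 - x ^ 2) /
            (Real.sqrt (1 - 2 * z * x + z ^ 2) *
              (1 - z + Real.sqrt (1 - 2 * z * x + z ^ 2)) *
              (1 + z + Real.sqrt (1 - 2 * z * x + z ^ 2)))) *
          Real.log ((1 + x) / (1 - x)))
      = ∫ x in (-1:ℝ)..1,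
        4*(1-x^2)/(Real.sqrt (1 - 2*z*x + z^2)*(1-z+Real.sqrt (1 - 2*z*x + z^2))
          *(1+z+Real.sqrt (1 - 2*z*x + z^2))) * Real.log ((1+x)/(1-x)) from rfl]
  rw [key]
  simp only [GFI.G0, GFI.Cc, GFI.Sone hz0 hz1, GFI.Smone hz0 hz1]
  rw [show (1:ℝ)-z+1-z = 2*(1-z) by ring, show (1:ℝ)+z+(1-z) = 2 by ring,
    show (1:ℝ)+z+1-z = 2 by ring, show (1:ℝ)+z+(1+z) = 2*(1+z) by ring,
    Real.log_mul (by norm_num) (by intro h; nlinarith : (1:ℝ)-z ≠ 0),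
    Real.log_mul (by norm_num) (by intro h; nlinarith : (1:ℝ)+z ≠ 0),
    Real.log_div (by intro h; nlinarith : (1:ℝ)+z ≠ 0) (by intro h; nlinarith : (1:ℝ)-z ≠ 0),
    Real.log_mul (by intro h; nlinarith : (1:ℝ)+z ≠ 0) (by intro h; nlinarith : (1:ℝ)-z ≠ 0)]
  field_simp
  ring
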